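/- For every integer n ≥ 2, the function T(a) = sinh(a) · ∫_1^∞ (v^{2n−2} − 1)^{−1/2} · (sinh²(a)·v² + 1)^{−1/2} dv satisfies lim_{a→0⁺} T(a) = 0 and lim_{a→∞} T(a) = π / (2(n−1)). -/

import Mathlib

open MeasureTheory Real Set Filter Topology

private lemma aux_deriv (m : ℕ) (hm : 1 ≤ m) (x : ℝ) (hx : 1 < x) :
    HasDerivAt (fun v : ℝ => (m : ℝ)⁻¹ * Real.arccos ((v ^ m)⁻¹))
      (1 / (x * Real.sqrt (x ^ (2 * m) - 1))) x := by
  have hx0 : (0:ℝ) < x := by linarith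
  have hxm : (1:ℝ) < x ^ m := one_lt_pow₀ hx (by omega)
  have hxm0 : (x:ℝ) ^ m ≠ 0 := by positivity
  have hx2m : (1:ℝ) < x ^ (2*m) := one_lt_pow₀ hx (by omega)
  have hy1 : (x ^ m)⁻¹ < 1 := by rw [inv_lt_one_iff₀]; right; exact hxm
  have hy0 : (0:ℝ) < (x ^ m)⁻¹ := by positivity
  have h1 : HasDerivAt (fun v : ℝ => (v ^ m)⁻¹)
      (-(↑m * x ^ (m - 1)) / (x ^ m) ^ 2) x := (hasDerivAt_pow m x).inv hxm0
  have h2 := (Real.hasDerivAt_arccos (by linarith) (by linarith)).comp x h1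
  have h3 := h2.const_mul ((m : ℝ)⁻¹)
  refine h3.congr_deriv ?_
  symm
  have hsq : Real.sqrt (1 - ((x ^ m)⁻¹) ^ 2) = Real.sqrt (x ^ (2*m) - 1) / x ^ m := by
    have e : 1 - ((x ^ m)⁻¹) ^ 2 = (x ^ (2*m) - 1) / (x ^ m) ^ 2 := by
      rw [pow_mul']
      field_simp
    rw [e, Real.sqrt_div (by linarith), Real.sqrt_sq (by positivity)]
  rw [hsq]
  have hS0 : Real.sqrt (x ^ (2*m) - 1) ≠ 0 := by
    have : (0:ℝ) < Real.sqrt (x ^ (2*m) - 1) := Real.sqrt_pos.2 (by linarith)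
    linarith
  set S := Real.sqrt (x ^ (2*m) - 1) with hS
  have key : x ^ m = x ^ (m-1) * x := by rw [← pow_succ]; congr 1; omega
  set t := x ^ (m-1) with ht
  have ht0 : t ≠ 0 := by positivity
  have hm0 : ((m:ℝ)) ≠ 0 := by positivity
  rw [key]
  field_simp

private lemma aux_F_tendsto (m : ℕ) (hm : 1 ≤ m) :
    Tendsto (fun v : ℝ => (m : ℝ)⁻¹ * Real.arccos ((v ^ m)⁻¹)) atTop
      (𝓝 (π / (2 * m))) := by
  have h1 : Tendsto (fun v : ℝ => ((v ^ m)⁻¹ : ℝ)) atTop (𝓝 0) :=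
    (tendsto_pow_atTop (by omega)).inv_tendsto_atTop
  have h2 : Tendsto (fun v : ℝ => Real.arccos ((v ^ m)⁻¹)) atTop (𝓝 (π/2)) := by
    have := (Real.continuous_arccos.tendsto 0).comp h1
    simpa [Real.arccos_zero, Function.comp_def] using this
  have h3 := h2.const_mul ((m:ℝ)⁻¹)
  have hm0 : ((m:ℝ)) ≠ 0 := by positivity
  convert h3 using 2
  rw [inv_mul_eq_div, div_div]

private lemma aux_F_cont (m : ℕ) :
    ContinuousWithinAt (fun v : ℝ => (m : ℝ)⁻¹ * Real.arccos ((v ^ m)⁻¹)) (Ici 1) 1 := by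
  apply ContinuousAt.continuousWithinAt
  exact continuousAt_const.mul
    (Real.continuous_arccos.continuousAt.comp ((continuousAt_pow 1 m).inv₀ (by simp)))

private lemma aux_nonneg (m : ℕ) (x : ℝ) (hx : x ∈ Ioi (1:ℝ)) :
    0 ≤ 1 / (x * Real.sqrt (x ^ (2 * m) - 1)) :=
  div_nonneg zero_le_one (mul_nonneg (by linarith [mem_Ioi.mp hx]) (Real.sqrt_nonneg _))

private lemma aux_integrable (m : ℕ) (hm : 1 ≤ m) :
    IntegrableOn (fun v : ℝ => 1 / (v * Real.sqrt (v ^ (2 * m) - 1))) (Ioi 1) :=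
  integrableOn_Ioi_deriv_of_nonneg (aux_F_cont m) (fun x hx => aux_deriv m hm x hx)
    (aux_nonneg m) (aux_F_tendsto m hm)

private lemma aux_integral (m : ℕ) (hm : 1 ≤ m) :
    ∫ v in Ioi (1:ℝ), 1 / (v * Real.sqrt (v ^ (2 * m) - 1)) = π / (2 * m) := by
  rw [integral_Ioi_of_hasDerivAt_of_nonneg (aux_F_cont m) (fun x hx => aux_deriv m hm x hx)
    (aux_nonneg m) (aux_F_tendsto m hm)]
  simp [Real.arccos_one]

private lemma aux_bound (m : ℕ) (s : ℝ) (hs : 0 < s) (v : ℝ) (hv : 1 < v) :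
    ‖s * (1 / (Real.sqrt (v ^ (2*m) - 1) * Real.sqrt (s ^ 2 * v ^ 2 + 1)))‖
      ≤ 1 / (v * Real.sqrt (v ^ (2*m) - 1)) := by
  have hv0 : (0:ℝ) < v := by linarith
  set A := Real.sqrt (v ^ (2*m) - 1) with hA
  have hA0 : 0 ≤ A := Real.sqrt_nonneg _
  set B := Real.sqrt (s ^ 2 * v ^ 2 + 1) with hB
  have hB1 : s * v ≤ B := by
    rw [hB, show s^2*v^2+1 = (s*v)^2 + 1 by ring]
    nlinarith [Real.sq_sqrt (show (0:ℝ) ≤ (s*v)^2+1 by positivity),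
      Real.sqrt_nonneg ((s*v)^2+1), sq_nonneg (Real.sqrt ((s*v)^2+1) - s*v)]
  rw [Real.norm_eq_abs, abs_of_nonneg (by positivity)]
  rw [mul_one_div]
  rcases eq_or_lt_of_le hA0 with h|hA0'
  · simp [← h]
  calc s / (A * B) ≤ s / (A * (s * v)) := by
        apply div_le_div_of_nonneg_left hs.le (by positivity)
        exact mul_le_mul_of_nonneg_left hB1 hA0
    _ = 1 / (v * A) := by
        field_simp

private lemma aux_meas (m : ℕ) (a : ℝ) :
    AEStronglyMeasurable
      (fun v : ℝ => Real.sinh a *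
        (1 / (Real.sqrt (v ^ (2*m) - 1) * Real.sqrt (Real.sinh a ^ 2 * v ^ 2 + 1))))
      (volume.restrict (Set.Ioi 1)) := by
  apply Measurable.aestronglyMeasurable
  apply Measurable.const_mul
  apply Measurable.div measurable_const
  exact ((Real.continuous_sqrt.measurable.comp (by measurability)).mul
    (Real.continuous_sqrt.measurable.comp (by measurability)))

private lemma aux_part1 (m : ℕ) (hm : 1 ≤ m) :
    Filter.Tendsto
      (fun a => ∫ v in Set.Ioi (1 : ℝ),
          Real.sinh a *
          (1 / (Real.sqrt (v ^ (2 * m) - 1) * Real.sqrt (Real.sinh a ^ 2 * v ^ 2 + 1))))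
      (nhdsWithin 0 (Set.Ioi 0)) (nhds 0) := by
  have h := tendsto_integral_filter_of_dominated_convergence
    (μ := volume.restrict (Set.Ioi 1)) (l := nhdsWithin 0 (Set.Ioi 0))
    (F := fun a v => Real.sinh a *
      (1 / (Real.sqrt (v ^ (2*m) - 1) * Real.sqrt (Real.sinh a ^ 2 * v ^ 2 + 1))))
    (f := fun _ => (0:ℝ))
    (fun v => 1 / (v * Real.sqrt (v ^ (2 * m) - 1)))
    (Eventually.of_forall fun a => aux_meas m a)
    ?_ (aux_integrable m hm) ?_
  · simpa using h
  · filter_upwards [self_mem_nhdsWithin] with a ha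
    rw [ae_restrict_iff' measurableSet_Ioi]
    filter_upwards with v hv
    exact aux_bound m _ (Real.sinh_pos_iff.2 ha) v hv
  · rw [ae_restrict_iff' measurableSet_Ioi]
    filter_upwards with v
    intro hv
    have hv1 : (1:ℝ) < v := hv
    set A := Real.sqrt (v ^ (2*m) - 1) with hA
    have hc : Continuous (fun a : ℝ =>
        Real.sinh a * (1 / (A * Real.sqrt (Real.sinh a ^ 2 * v ^ 2 + 1)))) := by
      apply Real.continuous_sinh.mul
      apply continuous_const.div
      · exact continuous_const.mul (Real.continuous_sqrt.comp (by continuity))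
      · intro a
        have h1 : (0:ℝ) < Real.sqrt (Real.sinh a ^ 2 * v ^ 2 + 1) :=
          Real.sqrt_pos.2 (by positivity)
        have hA0 : 0 < A := Real.sqrt_pos.2 (by
          have : (1:ℝ) < v ^ (2*m) := one_lt_pow₀ hv1 (by omega)
          linarith)
        positivity
    have := (hc.tendsto 0).mono_left (nhdsWithin_le_nhds (s := Set.Ioi 0))
    simpa using this

private lemma sinh_tendsto_atTop' : Tendsto Real.sinh atTop atTop := by
  apply tendsto_atTop_mono' atTop _ tendsto_id
  filter_upwards [eventually_gt_atTop 0] with x hx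
  exact (Real.self_lt_sinh_iff.2 hx).le

private lemma aux_part2 (m : ℕ) (hm : 1 ≤ m) :
    Filter.Tendsto
      (fun a => ∫ v in Set.Ioi (1 : ℝ),
          Real.sinh a *
          (1 / (Real.sqrt (v ^ (2 * m) - 1) * Real.sqrt (Real.sinh a ^ 2 * v ^ 2 + 1))))
      Filter.atTop (nhds (π / (2 * m))) := by
  rw [← aux_integral m hm]
  apply tendsto_integral_filter_of_dominated_convergence
    (fun v => 1 / (v * Real.sqrt (v ^ (2 * m) - 1)))
    (Eventually.of_forall fun a => aux_meas m a)
    ?_ (aux_integrable m hm) ?_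
  · filter_upwards [eventually_gt_atTop 0] with a ha
    rw [ae_restrict_iff' measurableSet_Ioi]
    filter_upwards with v hv
    exact aux_bound m _ (Real.sinh_pos_iff.2 ha) v hv
  · rw [ae_restrict_iff' measurableSet_Ioi]
    filter_upwards with v hv
    have hv1 : (1:ℝ) < v := hv
    have hv0 : (0:ℝ) < v := by linarith
    set A := Real.sqrt (v ^ (2*m) - 1) with hA
    have hA0 : 0 < A := Real.sqrt_pos.2 (by
      have : (1:ℝ) < v ^ (2*m) := one_lt_pow₀ hv1 (by omega)
      linarith)
    have l0 : Tendsto (fun s : ℝ => v^2 + (s⁻¹)^2) atTop (𝓝 (v^2)) := by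
      have := tendsto_const_nhds (α := ℝ) (x := v^2) |>.add (tendsto_inv_atTop_zero.pow 2)
      simpa using this
    have l1 : Tendsto (fun s : ℝ => Real.sqrt (v^2 + (s⁻¹)^2)) atTop (𝓝 v) := by
      have := (Real.continuous_sqrt.tendsto (v^2)).comp l0
      simpa [Real.sqrt_sq hv0.le, Function.comp_def] using this
    have l2 : Tendsto (fun s : ℝ => (1/A) * (1/Real.sqrt (v^2 + (s⁻¹)^2))) atTop
        (𝓝 ((1/A) * (1/v))) :=
      tendsto_const_nhds.mul (tendsto_const_nhds.div l1 hv0.ne')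
    have heq : ∀ᶠ s : ℝ in atTop,
        (1/A) * (1/Real.sqrt (v^2 + (s⁻¹)^2))
          = s * (1 / (A * Real.sqrt (s ^ 2 * v ^ 2 + 1))) := by
      filter_upwards [eventually_gt_atTop 0] with s hs
      have e1 : s^2*v^2+1 = s^2*(v^2+(s⁻¹)^2) := by
        field_simp
      have e2 : Real.sqrt (s^2*v^2+1) = s * Real.sqrt (v^2+(s⁻¹)^2) := by
        rw [e1, Real.sqrt_mul (sq_nonneg s), Real.sqrt_sq hs.le]
      rw [e2]
      have h3 : (0:ℝ) < Real.sqrt (v^2+(s⁻¹)^2) := Real.sqrt_pos.2 (by positivity)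
      field_simp
    have hphi : Tendsto (fun s : ℝ => s * (1 / (A * Real.sqrt (s ^ 2 * v ^ 2 + 1)))) atTop
        (𝓝 (1 / (v * A))) := by
      have := l2.congr' heq
      convert this using 2
      rw [div_mul_div_comm, one_mul, mul_comm]
    exact hphi.comp sinh_tendsto_atTop'

/-- the half-height `T(a) = sinh(a) ∫_1^∞ (v^{2n-2}-1)^{-1/2} (sinh²(a)v²+1)^{-1/2} dv`
satisfies `T(a) → 0` as `a → 0⁺` and `T(a) → π / (2(n-1))` as `a → ∞`. -/
theorem stmt_8 (n : ℕ) (hn : 2 ≤ n) :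
    Filter.Tendsto
      (fun a => Real.sinh a *
        ∫ v in Set.Ioi (1 : ℝ),
          1 / (Real.sqrt (v ^ (2 * n - 2) - 1) * Real.sqrt (Real.sinh a ^ 2 * v ^ 2 + 1)))
      (nhdsWithin 0 (Set.Ioi 0)) (nhds 0) ∧
    Filter.Tendsto
      (fun a => Real.sinh a *
        ∫ v in Set.Ioi (1 : ℝ),
          1 / (Real.sqrt (v ^ (2 * n - 2) - 1) * Real.sqrt (Real.sinh a ^ 2 * v ^ 2 + 1)))
      Filter.atTop (nhds (Real.pi / (2 * ((n : ℝ) - 1)))) := by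
  set m := n - 1 with hmdef
  have hm : 1 ≤ m := by omega
  have h2m : 2 * n - 2 = 2 * m := by omega
  have hcast : ((m : ℝ)) = (n : ℝ) - 1 := by
    rw [hmdef]
    push_cast [Nat.cast_sub (by omega : 1 ≤ n)]
    ring
  simp only [h2m, ← MeasureTheory.integral_const_mul]
  constructor
  · exact aux_part1 m hm
  · have := aux_part2 m hm
    rwa [hcast] at this
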